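/- arXiv:1810.11214 — 2 statements merged into one kernel-verified Lean document; each statement's English description precedes it below -/
import Mathlib

section
/- With the hypotheses of the previous statement (φ with m-controllability growth, F with m-growth), the normalized family (k_n/√(1+|2πn/L|^{2m}))_{n∈ℤ} is complete in H^m_{per}: if f ∈ H^m_{per} satisfies ⟨f, k_n⟩_m = 0 for all n ∈ ℤ, then f = 0. -/
open Complex Real

open MeasureTheory Filter ENNReal

lemma core6 (L lam : ℝ) (hL : 0 < L) (hlam : 0 < lam) (g : ℤ → ℂ)
    (hg : Summable fun p : ℤ => ‖g p‖ ^ 2)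
    (h0 : ∀ n : ℤ, (∑' p : ℤ, g p /
      ((lam : ℂ) - (2 * Real.pi * Complex.I / L) * ((n : ℂ) + (p : ℂ)))) = 0) :
    ∀ p : ℤ, g p = 0 := by
  haveI : Fact (0 < L) := ⟨hL⟩
  set μc : ℂ := 2 * Real.pi * Complex.I / L with hμc
  set e : ℝ → ℂ := fun x => Complex.exp (-(lam : ℂ) * x) with he
  set E : AddCircle L → ℂ := AddCircle.liftIco L 0 e with hEdef
  have hL0 : (L:ℂ) ≠ 0 := by exact_mod_cast hL.ne'
  have hEval : ∀ z : AddCircle L, E z = e ((AddCircle.equivIco L 0 z : ℝ)) := fun z => rfl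
  have hEne : ∀ z, E z ≠ 0 := fun z => by rw [hEval]; exact Complex.exp_ne_zero _
  have hEbd : ∀ z, ‖E z‖ ≤ 1 := by
    intro z
    rw [hEval]
    set x : ℝ := (AddCircle.equivIco L 0 z : ℝ) with hx
    have hx0 : (0:ℝ) ≤ x := by
      have := (AddCircle.equivIco L 0 z).2.1
      simpa [hx] using this
    have hcast : (-(lam:ℂ) * (x:ℂ)) = ((-(lam * x) : ℝ) : ℂ) := by push_cast; ring
    rw [he]; simp only []
    rw [hcast, ← Complex.ofReal_exp, Complex.norm_real]
    rw [Real.norm_eq_abs, abs_of_pos (Real.exp_pos _)]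
    exact Real.exp_le_one_iff.mpr (by nlinarith)
  have hEmeas : Measurable E := by
    have hc : Continuous fun x : Set.Ico (0:ℝ) (0 + L) => e (x : ℝ) := by
      apply Complex.continuous_exp.comp
      exact (continuous_const.mul Complex.continuous_ofReal).comp continuous_subtype_val
    exact hc.measurable.comp (AddCircle.measurableEquivIco (T := L) 0).measurable
  -- Fourier coefficients of E
  have hEc : ∀ q : ℤ, fourierCoeff E q =
      (1 - Complex.exp (-(lam:ℂ) * L)) / (L * ((lam:ℂ) + μc * q)) := by
    intro q
    set c : ℂ := -(lam:ℂ) - ((2 * Real.pi * q / L : ℝ) : ℂ) * Complex.I with hc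
    have hc0 : c ≠ 0 := by
      intro h
      have := congrArg Complex.re h
      simp [hc] at this
      exact absurd this (ne_of_gt hlam)
    have hkey : (lam:ℂ) + μc * q = -c := by
      rw [hμc, hc]; push_cast; field_simp; ring
    rw [hEdef, fourierCoeff_liftIco_eq, fourierCoeffOn_eq_integral]
    have hint : Set.EqOn
        (fun x : ℝ => (fourier (T := 0 + L - 0) (-q) (x : AddCircle (0 + L - 0))) • e x)
        (fun x : ℝ => Complex.exp (c * x)) (Set.uIcc 0 (0 + L)) := by
      intro x _
      simp only [fourier_coe_apply, smul_eq_mul, he, ← Complex.exp_add, hc]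
      congr 1
      push_cast
      field_simp
      have hLinv : (L:ℂ) * (L:ℂ)⁻¹ = 1 := mul_inv_cancel₀ hL0
      linear_combination (-(x:ℂ) * π * I * q * 2) * hLinv
    rw [intervalIntegral.integral_congr hint, integral_exp_mul_complex hc0]
    have h1 : c * (((0:ℝ) + L : ℝ) : ℂ) =
        -(lam:ℂ) * L + (-q : ℤ) * (2 * Real.pi * Complex.I) := by
      rw [hc]; push_cast; field_simp; ring
    rw [h1, Complex.exp_add, Complex.exp_int_mul_two_pi_mul_I, mul_one]
    rw [hkey]
    norm_num
    field_simp
    ring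
  -- g as an ℓ² element
  have hg2 : Memℓp g 2 := by
    apply memℓp_gen
    have h2 : ((2:ℝ≥0∞)).toReal = (2:ℝ) := by norm_num
    rw [h2]
    have : ∀ i : ℤ, ‖g i‖ ^ (2:ℝ) = ‖g i‖ ^ (2:ℕ) := fun i => by
      rw [← Real.rpow_natCast (‖g i‖) 2]; norm_num
    simpa [this] using hg
  set glp : lp (fun _ : ℤ => ℂ) 2 := ⟨g, hg2⟩ with hglp
  set G := (fourierBasis (T := L)).repr.symm glp with hGdef
  -- all Fourier coefficients of E * G vanish
  have hcoeff : ∀ n : ℤ, fourierCoeff (fun z => E z * (G : AddCircle L → ℂ) z) n = 0 := by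
    intro n
    set W : AddCircle L → ℂ := fun z => (starRingEnd ℂ) (fourier (-n) z * E z) with hW
    have hWmeas : AEStronglyMeasurable W AddCircle.haarAddCircle := by
      apply Continuous.comp_aestronglyMeasurable continuous_conj
      exact ((map_continuous (fourier (-n))).aestronglyMeasurable.mul
        hEmeas.aestronglyMeasurable)
    have hWbd : ∀ z, ‖W z‖ ≤ 1 := by
      intro z
      rw [hW]
      rw [RCLike.norm_conj, norm_mul]
      calc ‖fourier (-n) z‖ * ‖E z‖ ≤ 1 * 1 := by
            apply mul_le_mul _ (hEbd z) (norm_nonneg _) zero_le_one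
            exact le_of_eq (Circle.norm_coe _)
        _ = 1 := by norm_num
    have hW2 : MemLp W 2 AddCircle.haarAddCircle :=
      MemLp.of_bound hWmeas 1 (Eventually.of_forall hWbd)
    set Wlp := hW2.toLp W with hWlp
    have hinner : ∀ u : Lp ℂ 2 (AddCircle.haarAddCircle (T := L)),
        (inner ℂ Wlp u : ℂ) = ∫ z, (fourier (-n) z * E z) * u z ∂AddCircle.haarAddCircle := by
      intro u
      rw [MeasureTheory.L2.inner_def]
      apply integral_congr_ae
      filter_upwards [hW2.coeFn_toLp] with z hz
      rw [hz, RCLike.inner_apply]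
      simp [hW, mul_comm]
    have hterm : ∀ p : ℤ, (inner ℂ Wlp (fourierLp 2 p) : ℂ) = fourierCoeff E (n - p) := by
      intro p
      rw [hinner]
      simp only [fourierCoeff]
      apply integral_congr_ae
      filter_upwards [coeFn_fourierLp 2 p] with z hz
      rw [hz]
      have hfp : fourier (T := L) (-(n - p)) z = fourier (-n) z * fourier p z := by
        rw [show -(n - p) = -n + p by ring, fourier_add]
      rw [smul_eq_mul, hfp]
      ring
    have hsum : HasSum (fun p : ℤ => g p * fourierCoeff E (n - p)) (inner ℂ Wlp G) := by
      have h1 := (fourierBasis (T := L)).hasSum_repr_symm glp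
      have h2 := (innerSL ℂ Wlp).hasSum h1
      have heq : (fun p : ℤ => g p * fourierCoeff E (n - p)) =
          fun p => innerSL ℂ Wlp (glp p • (fourierBasis (T := L)) p) := by
        funext p
        rw [innerSL_apply_apply, inner_smul_right, ← hterm p]
        have hb : (fourierBasis (T := L)) p = fourierLp 2 p := congrFun coe_fourierBasis p
        rw [hb]
      rw [heq]
      exact h2
    have hEG : (inner ℂ Wlp G : ℂ) = fourierCoeff (fun z => E z * G z) n := by
      rw [hinner]
      simp only [fourierCoeff, smul_eq_mul, mul_assoc]
    rw [← hEG]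
    calc (inner ℂ Wlp G : ℂ) = ∑' p : ℤ, g p * fourierCoeff E (n - p) := hsum.tsum_eq.symm
      _ = ∑' p : ℤ, ((1 - Complex.exp (-(lam:ℂ) * L)) / L) *
            (g p / ((lam:ℂ) - μc * (((-n : ℤ) : ℂ) + (p : ℂ)))) := by
          apply tsum_congr; intro p
          rw [hEc (n - p)]
          have hd : (lam:ℂ) - μc * (((-n : ℤ):ℂ) + (p:ℂ)) = (lam:ℂ) + μc * ((n - p : ℤ):ℂ) := by
            push_cast; ring
          rw [hd]
          rw [div_mul_div_comm, mul_div_assoc']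
          ring_nf
      _ = ((1 - Complex.exp (-(lam:ℂ) * L)) / L) *
            ∑' p : ℤ, g p / ((lam:ℂ) - μc * (((-n : ℤ):ℂ) + (p:ℂ))) := tsum_mul_left
      _ = 0 := by rw [h0 (-n)]; ring
  -- conclude that G = 0 hence g = 0
  have hmemEG : MemLp (fun z => E z * G z) 2 AddCircle.haarAddCircle := by
    apply MemLp.of_le (Lp.memLp G)
    · exact hEmeas.aestronglyMeasurable.mul (Lp.aestronglyMeasurable G)
    · apply Eventually.of_forall
      intro z
      rw [norm_mul]
      exact mul_le_of_le_one_left (norm_nonneg _) (hEbd z)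
  set U := hmemEG.toLp _ with hU
  have hUc : (fourierBasis (T := L)).repr U = 0 := by
    apply lp.ext
    funext k
    rw [fourierBasis_repr]
    have hsame : fourierCoeff (U : AddCircle L → ℂ) k = fourierCoeff (fun z => E z * G z) k := by
      simp only [fourierCoeff]
      apply integral_congr_ae
      filter_upwards [hmemEG.coeFn_toLp] with z hz
      rw [hz]
    rw [hsame, hcoeff k]
    rfl
  have hU0 : U = 0 := by
    have h := congrArg (fourierBasis (T := L)).repr.symm hUc
    simpa using h
  have hGae : ⇑G =ᵐ[AddCircle.haarAddCircle] 0 := by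
    have h1 : (fun z => E z * G z) =ᵐ[AddCircle.haarAddCircle] ⇑U := (hmemEG.coeFn_toLp).symm
    rw [hU0] at h1
    have h2 := Lp.coeFn_zero (E := ℂ) (p := 2) (μ := AddCircle.haarAddCircle (T := L))
    have h3 := h1.trans h2
    filter_upwards [h3] with z hz
    exact (mul_eq_zero.mp hz).resolve_left (hEne z)
  have hG0 : G = 0 := Lp.eq_zero_iff_ae_eq_zero.mpr hGae
  have hglp0 : glp = 0 := by
    have h := congrArg (fourierBasis (T := L)).repr hG0
    rw [hGdef] at h
    simpa using h
  intro p
  have : glp p = 0 := by rw [hglp0]; rfl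
  exact this


/-- completeness of the normalized kernel family in `H^m_{per}`, expressed on
Fourier coefficients: if `f ∈ H^m_{per}` is `H^m`-orthogonal to every
`k_n = -conj(F_{-n}) Λ_n^λ ⋆ φ`, then `f = 0`. -/
theorem stmt_6 (L lam c C c₁ c₂ : ℝ) (m : ℕ) (hm : 1 ≤ m)
    (hL : 0 < L) (hlam : 0 < lam) (hc : 0 < c) (hc₁ : 0 < c₁)
    (φ F : ℤ → ℂ)
    (hφ : ∀ n : ℤ,
      c / Real.sqrt (1 + |2 * Real.pi * (n : ℝ) / L| ^ (2 * m)) ≤ ‖φ n‖ ∧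
      ‖φ n‖ ≤ C / Real.sqrt (1 + |2 * Real.pi * (n : ℝ) / L| ^ (2 * m)))
    (hF : ∀ n : ℤ,
      c₁ * Real.sqrt (1 + |2 * Real.pi * (n : ℝ) / L| ^ (2 * m)) ≤ ‖F n‖ ∧
      ‖F n‖ ≤ c₂ * Real.sqrt (1 + |2 * Real.pi * (n : ℝ) / L| ^ (2 * m)))
    (f : ℤ → ℂ)
    (hf : Summable fun p : ℤ =>
      (1 + |2 * Real.pi * (p : ℝ) / L| ^ (2 * m)) * ‖f p‖ ^ 2)
    (horth : ∀ n : ℤ,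
      (∑' p : ℤ, ((1 + |2 * Real.pi * (p : ℝ) / L| ^ (2 * m) : ℝ) : ℂ) *
        (f p * (starRingEnd ℂ)
          (-(starRingEnd ℂ) (F (-n)) * φ p /
            ((lam : ℂ) + (2 * Real.pi * Complex.I / L) * (n + p))))) = 0) :
    f = 0 := by
  set w : ℤ → ℝ := fun p => 1 + |2 * Real.pi * (p : ℝ) / L| ^ (2 * m) with hwfun
  have hwdef : ∀ p, w p = 1 + |2 * Real.pi * (p : ℝ) / L| ^ (2 * m) := fun p => rfl
  have hw1 : ∀ p, (1:ℝ) ≤ w p := fun p =>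
    le_add_of_nonneg_right (pow_nonneg (abs_nonneg _) _)
  have hw0 : ∀ p, (0:ℝ) < w p := fun p => lt_of_lt_of_le one_pos (hw1 p)
  have hsq : ∀ p, Real.sqrt (w p) ^ 2 = w p := fun p => Real.sq_sqrt (hw0 p).le
  have hsqpos : ∀ p, 0 < Real.sqrt (w p) := fun p => Real.sqrt_pos.mpr (hw0 p)
  set g : ℤ → ℂ := fun p => ((w p : ℝ) : ℂ) * f p * (starRingEnd ℂ) (φ p) with hg
  have hφne : ∀ p, φ p ≠ 0 := by
    intro p hzero
    have h := (hφ p).1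
    rw [hzero, norm_zero, ← hwdef p] at h
    have hlt : 0 < c / Real.sqrt (w p) := div_pos hc (hsqpos p)
    linarith
  have hgnorm : ∀ p, ‖g p‖ = w p * ‖f p‖ * ‖φ p‖ := by
    intro p
    rw [hg]; simp only []
    rw [norm_mul, norm_mul, Complex.norm_real, Real.norm_eq_abs, RCLike.norm_conj, abs_of_pos (hw0 p)]
  have hgsum : Summable fun p => ‖g p‖ ^ 2 := by
    apply Summable.of_nonneg_of_le (fun p => sq_nonneg _) _ (hf.mul_left (C ^ 2))
    intro p
    have hφ2 : ‖φ p‖ ^ 2 ≤ C ^ 2 / w p := by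
      have h := (hφ p).2
      rw [← hwdef p] at h
      calc ‖φ p‖ ^ 2 ≤ (C / Real.sqrt (w p)) ^ 2 := by
            apply pow_le_pow_left₀ (norm_nonneg _) h
        _ = C ^ 2 / w p := by rw [div_pow, hsq]
    have hφ2' : ‖φ p‖ ^ 2 * w p ≤ C ^ 2 := (le_div_iff₀ (hw0 p)).mp hφ2
    have hkey := mul_le_mul_of_nonneg_left hφ2'
      (show (0:ℝ) ≤ w p * ‖f p‖ ^ 2 by positivity)
    calc ‖g p‖ ^ 2 = (w p * ‖f p‖ ^ 2) * (‖φ p‖ ^ 2 * w p) := by rw [hgnorm p]; ring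
      _ ≤ (w p * ‖f p‖ ^ 2) * C ^ 2 := hkey
      _ = C ^ 2 * ((1 + |2 * Real.pi * (p : ℝ) / L| ^ (2 * m)) * ‖f p‖ ^ 2) := by
          rw [← hwdef p]; ring
  have hFne : ∀ n : ℤ, F n ≠ 0 := by
    intro n hzero
    have h := (hF n).1
    rw [hzero, norm_zero, ← hwdef n] at h
    have h1 : (1:ℝ) ≤ Real.sqrt (w n) := by
      rw [show (1:ℝ) = Real.sqrt 1 by simp]
      exact Real.sqrt_le_sqrt (hw1 n)
    nlinarith
  have h0 : ∀ n : ℤ, (∑' p : ℤ, g p /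
      ((lam : ℂ) - (2 * Real.pi * Complex.I / L) * ((n : ℂ) + (p : ℂ)))) = 0 := by
    intro n
    have horth' := horth n
    have hterm : ∀ p : ℤ,
        ((1 + |2 * Real.pi * (p : ℝ) / L| ^ (2 * m) : ℝ) : ℂ) *
          (f p * (starRingEnd ℂ) (-(starRingEnd ℂ) (F (-n)) * φ p /
            ((lam : ℂ) + (2 * Real.pi * Complex.I / L) * ((n : ℤ) + (p : ℤ))))) =
        (-(F (-n))) * (g p /
          ((lam : ℂ) - (2 * Real.pi * Complex.I / L) * ((n : ℂ) + (p : ℂ)))) := by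
      intro p
      rw [hg]; simp only []
      rw [map_div₀, map_mul, map_neg, Complex.conj_conj]
      have hden : (starRingEnd ℂ)
          ((lam : ℂ) + 2 * Real.pi * Complex.I / L * ((n : ℤ) + (p : ℤ))) =
          (lam : ℂ) - 2 * Real.pi * Complex.I / L * ((n : ℂ) + (p : ℂ)) := by
        simp [map_add, map_mul, map_div₀, map_ofNat, Complex.conj_ofReal, Complex.conj_I]
        ring
      rw [hden, ← hwdef p]
      ring
    rw [tsum_congr hterm, tsum_mul_left] at horth'
    rcases mul_eq_zero.mp horth' with h | h
    · exact absurd (neg_eq_zero.mp h) (hFne (-n))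
    · exact h
  have hzero := core6 L lam hL hlam g hgsum h0
  funext p
  have hgp := hzero p
  rw [hg] at hgp; simp only [] at hgp
  have hwpC : ((w p : ℝ) : ℂ) ≠ 0 := by
    exact_mod_cast (hw0 p).ne'
  have hconj : (starRingEnd ℂ) (φ p) ≠ 0 := by
    simpa using hφne p
  rcases mul_eq_zero.mp hgp with h | h
  · rcases mul_eq_zero.mp h with h' | h'
    · exact absurd h' hwpC
    · exact h'
  · exact absurd h hconj
end

section
/- Let m ≥ 0, −m ≤ σ < 1/2, and let (G_n)_{n∈ℤ} satisfy c√(1+|2πn/L|^{2m}) ≤ |G_n| for all n with c > 0. Then the linear form α ↦ Σ G_n α_n is not bounded on H^{m+σ}_{per}: there exists a sequence (γ^{(N)}) in H^{m+s}_{per} (for any fixed s > 1/2) with ‖γ^{(N)}‖_{m+σ} > 0 and |Σ_n G_n γ^{(N)}_n| / ‖γ^{(N)}‖_{m+σ} → ∞ as N → ∞. -/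
open Complex Real Filter

/-- a linear form with coefficients bounded below by `m`-growth is not bounded
on `H^{m+σ}_{per}` for `-m ≤ σ < 1/2`: there is a sequence `γ^{(N)}` in `H^{m+s}_{per}`
(for a fixed `s > 1/2`) on which the ratio `|G(γ^{(N)})|/‖γ^{(N)}‖_{m+σ}` blows up. -/
theorem stmt_10 (L m s σ c : ℝ) (hL : 0 < L) (hm : 0 ≤ m) (hσ₁ : -m ≤ σ) (hσ₂ : σ < 1 / 2)
    (hs : 1 / 2 < s) (hc : 0 < c) (G : ℤ → ℂ)
    (hG : ∀ n : ℤ, c * Real.sqrt (1 + |2 * Real.pi * (n : ℝ) / L| ^ (2 * m)) ≤ ‖G n‖) :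
    ∃ γ : ℕ → ℤ → ℂ,
      (∀ N : ℕ, Summable fun n : ℤ =>
        (1 + |2 * Real.pi * (n : ℝ) / L| ^ (2 * (m + s))) * ‖γ N n‖ ^ 2) ∧
      (∀ N : ℕ, 0 < Real.sqrt (∑' n : ℤ,
        (1 + |2 * Real.pi * (n : ℝ) / L| ^ (2 * (m + σ))) * ‖γ N n‖ ^ 2)) ∧
      (∀ N : ℕ, Summable fun n : ℤ => ‖G n * γ N n‖) ∧
      Tendsto (fun N : ℕ => ‖∑' n : ℤ, G n * γ N n‖ /
          Real.sqrt (∑' n : ℤ,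
            (1 + |2 * Real.pi * (n : ℝ) / L| ^ (2 * (m + σ))) * ‖γ N n‖ ^ 2))
        atTop atTop := by
  have hπ : (0:ℝ) < Real.pi := Real.pi_pos
  set τ : ℝ := max σ 0 with hτdef
  have hτ0 : 0 ≤ τ := le_max_right _ _
  have hστ : σ ≤ τ := le_max_left _ _
  have hτhalf : τ < 1/2 := max_lt hσ₂ (by norm_num)
  set u : ℝ := τ/2 + 3/4 with hudef
  have hu0 : 0 < u := by rw [hudef]; linarith
  have hu1 : u < 1 := by rw [hudef]; linarith
  set C : ℝ := 2 * max 1 ((2*Real.pi/L)^(2*τ)) with hCdef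
  have hmax1 : (1:ℝ) ≤ max 1 ((2*Real.pi/L)^(2*τ)) := le_max_left _ _
  have hC2 : 2 ≤ C := by rw [hCdef]; nlinarith
  have hC0 : 0 < C := by linarith
  have hmσ : 0 ≤ m + σ := by linarith
  clear_value τ u C
  -- lower bounds on ‖G n‖
  have hGc : ∀ n : ℤ, c ≤ ‖G n‖ := by
    intro n
    have h1 : (1:ℝ) ≤ Real.sqrt (1 + |2 * Real.pi * (n : ℝ) / L| ^ (2 * m)) := by
      rw [Real.one_le_sqrt]
      have : (0:ℝ) ≤ |2 * Real.pi * (n : ℝ) / L| ^ (2 * m) :=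
        Real.rpow_nonneg (abs_nonneg _) _
      linarith
    calc c = c * 1 := (mul_one c).symm
    _ ≤ c * Real.sqrt (1 + |2 * Real.pi * (n : ℝ) / L| ^ (2 * m)) := by
        exact mul_le_mul_of_nonneg_left h1 hc.le
    _ ≤ ‖G n‖ := hG n
  have hGpos : ∀ n : ℤ, 0 < ‖G n‖ := fun n => lt_of_lt_of_le hc (hGc n)
  have hGsq : ∀ n : ℤ, c^2 * (1 + |2 * Real.pi * (n : ℝ) / L| ^ (2 * m)) ≤ ‖G n‖^2 := by
    intro n
    have h0 : (0:ℝ) ≤ 1 + |2 * Real.pi * (n : ℝ) / L| ^ (2 * m) := by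
      have : (0:ℝ) ≤ |2 * Real.pi * (n : ℝ) / L| ^ (2 * m) :=
        Real.rpow_nonneg (abs_nonneg _) _
      linarith
    have hsq := Real.sq_sqrt h0
    have h2 : (c * Real.sqrt (1 + |2 * Real.pi * (n : ℝ) / L| ^ (2 * m)))^2 ≤ ‖G n‖^2 :=
      pow_le_pow_left₀ (by positivity) (hG n) 2
    calc c^2 * (1 + |2 * Real.pi * (n : ℝ) / L| ^ (2 * m))
        = (c * Real.sqrt (1 + |2 * Real.pi * (n : ℝ) / L| ^ (2 * m)))^2 := by
          rw [mul_pow, hsq]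
      _ ≤ ‖G n‖^2 := h2
  -- the sequence
  set γ : ℕ → ℤ → ℂ := fun N n => if 1 ≤ n ∧ n ≤ (N:ℤ)+1 then
      ((((n:ℝ)^(-u) / ‖G n‖^2 : ℝ)):ℂ) * (starRingEnd ℂ) (G n) else 0 with hγdef
  have hγ0 : ∀ N : ℕ, ∀ n ∉ Finset.Icc (1:ℤ) ((N:ℤ)+1), γ N n = 0 := by
    intro N n hn
    rw [hγdef]
    exact if_neg (by simpa [Finset.mem_Icc] using hn)
  have hγnorm : ∀ N : ℕ, ∀ n : ℤ, 1 ≤ n → n ≤ (N:ℤ)+1 →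
      ‖γ N n‖ = (n:ℝ)^(-u) / ‖G n‖ := by
    intro N n h1 h2
    have hn0 : (0:ℝ) < (n:ℝ) := by exact_mod_cast h1.trans_lt' (by norm_num)
    have hr0 : (0:ℝ) ≤ (n:ℝ)^(-u) / ‖G n‖^2 :=
      div_nonneg (Real.rpow_nonneg hn0.le _) (sq_nonneg _)
    simp only [hγdef]
    rw [if_pos (⟨h1, h2⟩ : 1 ≤ n ∧ n ≤ (N:ℤ)+1)]
    rw [norm_mul, Complex.norm_real, RCLike.norm_conj, Real.norm_eq_abs,
      _root_.abs_of_nonneg hr0, sq]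
    rw [div_mul_eq_mul_div, mul_div_mul_right _ _ (hGpos n).ne']
  have hmulγ : ∀ N : ℕ, ∀ n : ℤ, 1 ≤ n → n ≤ (N:ℤ)+1 →
      G n * γ N n = (((n:ℝ)^(-u) : ℝ) : ℂ) := by
    intro N n h1 h2
    simp only [hγdef]
    rw [if_pos (⟨h1, h2⟩ : 1 ≤ n ∧ n ≤ (N:ℤ)+1)]
    rw [mul_left_comm, Complex.mul_conj', ← Complex.ofReal_pow, ← Complex.ofReal_mul,
      div_mul_cancel₀]
    exact pow_ne_zero _ (hGpos n).ne'
  -- key pointwise inequality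
  have hkey : ∀ n : ℤ, 1 ≤ n →
      1 + |2 * Real.pi * (n : ℝ) / L| ^ (2 * (m + σ)) ≤
        C * (1 + |2 * Real.pi * (n : ℝ) / L| ^ (2 * m)) * (n:ℝ)^(2*τ) := by
    intro n h1
    have hn1 : (1:ℝ) ≤ (n:ℝ) := by exact_mod_cast h1
    have hn0 : (0:ℝ) < (n:ℝ) := lt_of_lt_of_le one_pos hn1
    have hwpos : (0:ℝ) < 2 * Real.pi * (n : ℝ) / L := by positivity
    have habs : |2 * Real.pi * (n : ℝ) / L| = 2 * Real.pi * (n : ℝ) / L :=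
      abs_of_pos hwpos
    set w : ℝ := 2 * Real.pi * (n : ℝ) / L with hwdef
    clear_value w
    rw [habs]
    have hn2τ : (1:ℝ) ≤ (n:ℝ)^(2*τ) := Real.one_le_rpow hn1 (by linarith)
    have hw2m : (0:ℝ) ≤ w^(2*m) := Real.rpow_nonneg hwpos.le _
    by_cases hw1 : w ≤ 1
    · have hle1 : w^(2*(m+σ)) ≤ 1 := Real.rpow_le_one hwpos.le hw1 (by linarith)
      have hA : 2 ≤ C * (1 + w^(2*m)) := by
        have := le_mul_of_one_le_right hC0.le (by linarith : (1:ℝ) ≤ 1 + w^(2*m))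
        linarith
      have hB : C * (1 + w^(2*m)) ≤ C * (1 + w^(2*m)) * (n:ℝ)^(2*τ) :=
        le_mul_of_one_le_right (by linarith) hn2τ
      linarith
    · push_neg at hw1
      have h2 : w^(2*(m+σ)) ≤ w^(2*(m+τ)) :=
        Real.rpow_le_rpow_of_exponent_le hw1.le (by linarith)
      have h3 : w^(2*(m+τ)) = w^(2*m) * w^(2*τ) := by
        rw [← Real.rpow_add hwpos]; ring_nf
      have h4 : w^(2*τ) = (2*Real.pi/L)^(2*τ) * (n:ℝ)^(2*τ) := by
        rw [hwdef, show 2 * Real.pi * (n : ℝ) / L = (2*Real.pi/L) * (n:ℝ) by ring,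
          Real.mul_rpow (by positivity) hn0.le]
      have h5 : (2*Real.pi/L)^(2*τ) ≤ C/2 := by
        have := le_max_right (1:ℝ) ((2*Real.pi/L)^(2*τ))
        rw [hCdef]; linarith
      have h6 : (0:ℝ) ≤ (2*Real.pi/L)^(2*τ) := Real.rpow_nonneg (by positivity) _
      have hnτ0 : (0:ℝ) ≤ (n:ℝ)^(2*τ) := by linarith
      have e1 : w^(2*(m+σ)) ≤ w^(2*m) * ((C/2) * (n:ℝ)^(2*τ)) := by
        calc w^(2*(m+σ)) ≤ w^(2*m) * w^(2*τ) := h3 ▸ h2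
          _ = w^(2*m) * ((2*Real.pi/L)^(2*τ) * (n:ℝ)^(2*τ)) := by rw [h4]
          _ ≤ w^(2*m) * ((C/2) * (n:ℝ)^(2*τ)) := by
              exact mul_le_mul_of_nonneg_left
                (mul_le_mul_of_nonneg_right h5 hnτ0) hw2m
      have e5 : (1:ℝ) ≤ C/2 * (n:ℝ)^(2*τ) := by
        have h7 : (1:ℝ) ≤ C/2 := by linarith
        calc (1:ℝ) = 1*1 := by ring
          _ ≤ (C/2)*(n:ℝ)^(2*τ) := mul_le_mul h7 hn2τ zero_le_one (by linarith)
      calc 1 + w^(2*(m+σ)) ≤ (C/2) * (n:ℝ)^(2*τ) + w^(2*m) * ((C/2) * (n:ℝ)^(2*τ)) := by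
            linarith
        _ = (C * (1 + w^(2*m)) * (n:ℝ)^(2*τ))/2 := by ring
        _ ≤ C * (1 + w^(2*m)) * (n:ℝ)^(2*τ) := by
            have h8 : 0 ≤ C * (1 + w^(2*m)) * (n:ℝ)^(2*τ) :=
              mul_nonneg (mul_nonneg hC0.le (by linarith)) hnτ0
            linarith
  -- positivity of the σ-norm
  have hDpos : ∀ N : ℕ, 0 < ∑' n : ℤ,
      (1 + |2 * Real.pi * (n : ℝ) / L| ^ (2 * (m + σ))) * ‖γ N n‖ ^ 2 := by
    intro N
    rw [tsum_eq_sum (s := Finset.Icc 1 ((N:ℤ)+1)) (fun n hn => by rw [hγ0 N n hn]; simp)]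
    apply Finset.sum_pos'
    · intro i _
      have : (0:ℝ) ≤ |2 * Real.pi * (i : ℝ) / L| ^ (2 * (m+σ)) :=
        Real.rpow_nonneg (abs_nonneg _) _
      positivity
    · refine ⟨1, Finset.mem_Icc.2 ⟨le_rfl, by omega⟩, ?_⟩
      rw [hγnorm N 1 le_rfl (by omega)]
      have h1 : (0:ℝ) < ((1:ℤ):ℝ)^(-u) / ‖G 1‖ :=
        div_pos (Real.rpow_pos_of_pos (by norm_num) _) (hGpos 1)
      have h2 : (0:ℝ) ≤ |2 * Real.pi * ((1:ℤ) : ℝ) / L| ^ (2 * (m+σ)) :=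
        Real.rpow_nonneg (abs_nonneg _) _
      exact mul_pos (by linarith) (pow_pos h1 2)
  have hsumσ : ∀ N : ℕ, Summable fun n : ℤ =>
      (1 + |2 * Real.pi * (n : ℝ) / L| ^ (2 * (m + σ))) * ‖γ N n‖ ^ 2 := by
    intro N
    exact summable_of_ne_finset_zero (s := Finset.Icc 1 ((N:ℤ)+1))
      (fun n hn => by rw [hγ0 N n hn]; simp)
  refine ⟨γ, ?_, ?_, ?_, ?_⟩
  · intro N
    exact summable_of_ne_finset_zero (s := Finset.Icc 1 ((N:ℤ)+1))
      (fun n hn => by rw [hγ0 N n hn]; simp)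
  · intro N
    exact Real.sqrt_pos.2 (hDpos N)
  · intro N
    exact summable_of_ne_finset_zero (s := Finset.Icc 1 ((N:ℤ)+1))
      (fun n hn => by rw [hγ0 N n hn]; simp)
  -- the blow-up
  · set p : ℝ := 3/2 - τ with hpdef
    have hp1 : 1 < p := by rw [hpdef]; linarith
    have hKsum : Summable (fun n : ℤ => (C/c^2) * |(n:ℝ)|^(-p)) :=
      (Real.summable_abs_int_rpow hp1).mul_left _
    set K : ℝ := ∑' n : ℤ, (C/c^2) * |(n:ℝ)|^(-p) with hKdef
    have hterm_le : ∀ (N : ℕ) (n : ℤ),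
        (1 + |2 * Real.pi * (n : ℝ) / L| ^ (2 * (m + σ))) * ‖γ N n‖ ^ 2 ≤
          (C/c^2) * |(n:ℝ)|^(-p) := by
      intro N n
      by_cases hn : 1 ≤ n ∧ n ≤ (N:ℤ)+1
      · obtain ⟨h1, h2⟩ := hn
        have hn1 : (1:ℝ) ≤ (n:ℝ) := by exact_mod_cast h1
        have hn0 : (0:ℝ) < (n:ℝ) := lt_of_lt_of_le one_pos hn1
        rw [hγnorm N n h1 h2, abs_of_pos hn0, div_pow]
        have hkey' := hkey n h1
        have hGsq' := hGsq n
        have hw2m : (0:ℝ) ≤ |2 * Real.pi * (n : ℝ) / L|^(2*m) :=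
          Real.rpow_nonneg (abs_nonneg _) _
        have hprod : (n:ℝ)^(2*τ) * ((n:ℝ)^(-u))^2 = (n:ℝ)^(-p) := by
          rw [sq, ← Real.rpow_add hn0, ← Real.rpow_add hn0]
          congr 1
          rw [hpdef, hudef]; ring
        have hX : (0:ℝ) ≤ ((n:ℝ)^(-u))^2 := sq_nonneg _
        have hnτ0 : (0:ℝ) ≤ (n:ℝ)^(2*τ) := Real.rpow_nonneg hn0.le _
        have hd : (0:ℝ) < c^2 * (1 + |2 * Real.pi * (n : ℝ) / L|^(2*m)) := by positivity
        have hne : (1 + |2 * Real.pi * (n : ℝ) / L|^(2*m)) ≠ 0 := by positivity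
        calc (1 + |2 * Real.pi * (n : ℝ) / L|^(2*(m+σ))) * (((n:ℝ)^(-u))^2 / ‖G n‖^2)
            = (1 + |2 * Real.pi * (n : ℝ) / L|^(2*(m+σ))) * ((n:ℝ)^(-u))^2 / ‖G n‖^2 := by
              ring
          _ ≤ (C * (1 + |2 * Real.pi * (n : ℝ) / L|^(2*m)) * (n:ℝ)^(2*τ) * ((n:ℝ)^(-u))^2) /
              (c^2 * (1 + |2 * Real.pi * (n : ℝ) / L|^(2*m))) := by
              apply div_le_div₀
              · exact mul_nonneg (mul_nonneg (mul_nonneg hC0.le (by linarith)) hnτ0) hX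
              · exact mul_le_mul_of_nonneg_right hkey' hX
              · exact hd
              · exact hGsq'
          _ = (C/c^2) * ((n:ℝ)^(2*τ) * ((n:ℝ)^(-u))^2) := by
              field_simp
          _ = (C/c^2) * (n:ℝ)^(-p) := by rw [hprod]
      · rw [hγ0 N n (by simpa [Finset.mem_Icc] using hn)]
        have h0 : (0:ℝ) ≤ (C/c^2) * |(n:ℝ)|^(-p) :=
          mul_nonneg (div_nonneg hC0.le (sq_nonneg c)) (Real.rpow_nonneg (abs_nonneg _) _)
        simpa using h0
    have hDK : ∀ N : ℕ, (∑' n : ℤ,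
        (1 + |2 * Real.pi * (n : ℝ) / L| ^ (2 * (m + σ))) * ‖γ N n‖ ^ 2) ≤ K :=
      fun N => Summable.tsum_le_tsum (hterm_le N) (hsumσ N) hKsum
    have hK0 : 0 < K := lt_of_lt_of_le (hDpos 0) (hDK 0)
    have hTsum : ∀ N : ℕ, ‖∑' n : ℤ, G n * γ N n‖ =
        ∑ n ∈ Finset.Icc (1:ℤ) ((N:ℤ)+1), (n:ℝ)^(-u) := by
      intro N
      rw [tsum_eq_sum (s := Finset.Icc 1 ((N:ℤ)+1))
        (fun n hn => by rw [hγ0 N n hn, mul_zero])]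
      have he : ∑ n ∈ Finset.Icc (1:ℤ) ((N:ℤ)+1), G n * γ N n
          = ∑ n ∈ Finset.Icc (1:ℤ) ((N:ℤ)+1), (((n:ℝ)^(-u) : ℝ) : ℂ) :=
        Finset.sum_congr rfl (fun n hn => by
          rw [Finset.mem_Icc] at hn; exact hmulγ N n hn.1 hn.2)
      rw [he, ← Complex.ofReal_sum, Complex.norm_real, Real.norm_eq_abs, _root_.abs_of_nonneg]
      refine Finset.sum_nonneg fun n hn => ?_
      rw [Finset.mem_Icc] at hn
      have : (0:ℝ) ≤ (n:ℝ) := by exact_mod_cast le_trans zero_le_one hn.1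
      exact Real.rpow_nonneg this _
    have hTlb : ∀ N : ℕ, ((N:ℝ)+1)^(1-u) ≤
        ∑ n ∈ Finset.Icc (1:ℤ) ((N:ℤ)+1), (n:ℝ)^(-u) := by
      intro N
      have hcard : (Finset.Icc (1:ℤ) ((N:ℤ)+1)).card = N+1 := by
        rw [Int.card_Icc]; omega
      have hb := Finset.card_nsmul_le_sum (Finset.Icc (1:ℤ) ((N:ℤ)+1))
        (fun n : ℤ => (n:ℝ)^(-u)) (((N:ℝ)+1)^(-u)) (by
          intro n hn
          rw [Finset.mem_Icc] at hn
          have h1 : (0:ℝ) < (n:ℝ) := by exact_mod_cast lt_of_lt_of_le zero_lt_one hn.1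
          have h2 : (n:ℝ) ≤ (N:ℝ)+1 := by exact_mod_cast hn.2
          exact Real.rpow_le_rpow_of_nonpos h1 h2 (by linarith))
      rw [hcard, nsmul_eq_mul] at hb
      have hcast : ((N+1 : ℕ) : ℝ) = (N:ℝ)+1 := by push_cast; ring
      rw [hcast] at hb
      have hsplit : ((N:ℝ)+1)^(1-u) = ((N:ℝ)+1) * ((N:ℝ)+1)^(-u) := by
        rw [show (1:ℝ) - u = 1 + -u by ring, Real.rpow_add (by positivity), Real.rpow_one]
      rw [hsplit]
      exact hb
    have haux : Tendsto (fun N : ℕ => ((N:ℝ)+1)^(1-u) / Real.sqrt K) atTop atTop := by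
      apply Tendsto.atTop_div_const (Real.sqrt_pos.2 hK0)
      exact (tendsto_rpow_atTop (by linarith)).comp
        (tendsto_atTop_add_const_right atTop 1 tendsto_natCast_atTop_atTop)
    apply tendsto_atTop_mono _ haux
    intro N
    rw [hTsum N]
    apply div_le_div₀
    · exact (hTsum N) ▸ (norm_nonneg _) |>.trans (le_of_eq rfl) |>.trans (le_refl _)
    · exact hTlb N
    · exact Real.sqrt_pos.2 (hDpos N)
    · exact Real.sqrt_le_sqrt (hDK N)
end
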